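/- Every metrizable Q_ω-set X is perfectly meager: every crowded (without isolated points) subspace Z ⊆ X is meager in itself. -/

import Mathlib

namespace Stmt13

open Set

lemma exists_net {Y : Type*} [MetricSpace Y] (ε : ℝ) (hε : 0 < ε) :
    ∃ S : Set Y, (∀ x ∈ S, ∀ y ∈ S, x ≠ y → ε ≤ dist x y) ∧
      ∀ z : Y, ∃ s ∈ S, dist z s < ε := by
  have hchainub : ∀ c ⊆ {S : Set Y | ∀ x ∈ S, ∀ y ∈ S, x ≠ y → ε ≤ dist x y},
      IsChain (· ⊆ ·) c → ∃ ub ∈ {S : Set Y | ∀ x ∈ S, ∀ y ∈ S, x ≠ y → ε ≤ dist x y},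
        ∀ s ∈ c, s ⊆ ub := by
    intro c hc hchain
    refine ⟨⋃₀ c, ?_, fun s hs => subset_sUnion_of_mem hs⟩
    rintro x ⟨s, hs, hx⟩ y ⟨t, ht, hy⟩ hxy
    rcases hchain.total hs ht with hst | hts
    · exact hc ht x (hst hx) y hy hxy
    · exact hc hs x hx y (hts hy) hxy
  obtain ⟨S, hS⟩ := zorn_subset {S : Set Y | ∀ x ∈ S, ∀ y ∈ S, x ≠ y → ε ≤ dist x y} hchainub
  refine ⟨S, hS.prop, fun z => ?_⟩
  by_contra h
  push_neg at h
  have hz : z ∉ S := fun hzS => absurd (by simpa using h z hzS) (not_le.mpr hε)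
  have hins : insert z S ∈ {S : Set Y | ∀ x ∈ S, ∀ y ∈ S, x ≠ y → ε ≤ dist x y} := by
    rintro x (rfl | hx) y (rfl | hy) hxy
    · exact absurd rfl hxy
    · exact h y hy
    · rw [dist_comm]; exact h x hx
    · exact hS.prop x hx y hy hxy
  exact hz (hS.2 hins (subset_insert z S) (mem_insert z S))

lemma separated_isClosed {Y : Type*} [MetricSpace Y] {S : Set Y} {ε : ℝ} (hε : 0 < ε)
    (hS : ∀ x ∈ S, ∀ y ∈ S, x ≠ y → ε ≤ dist x y) : IsClosed S := by
  rw [← closure_subset_iff_isClosed]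
  intro z hz
  by_contra hzS
  obtain ⟨s, hsS, hs⟩ := Metric.mem_closure_iff.mp hz (ε / 2) (by positivity)
  have hzs : z ≠ s := fun h => hzS (h ▸ hsS)
  obtain ⟨t, htS, ht⟩ := Metric.mem_closure_iff.mp hz (min (ε / 2) (dist z s))
    (lt_min (by positivity) (dist_pos.mpr hzs))
  have hts : t ≠ s := by
    intro h; subst h
    exact absurd ht (not_lt.mpr (min_le_right _ _))
  have hlt : dist t s < ε := by
    calc dist t s ≤ dist t z + dist z s := dist_triangle _ _ _
    _ < ε / 2 + ε / 2 := by
        rw [dist_comm t z]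
        exact add_lt_add_of_lt_of_lt (lt_of_lt_of_le ht (min_le_left _ _)) hs
    _ = ε := by ring
  linarith [hS t htS s hsS hts]

lemma separated_interior_empty {Y : Type*} [MetricSpace Y]
    (hY : ∀ y : Y, ¬ IsOpen ({y} : Set Y)) {S : Set Y} {ε : ℝ} (hε : 0 < ε)
    (hS : ∀ x ∈ S, ∀ y ∈ S, x ≠ y → ε ≤ dist x y) : interior S = ∅ := by
  rw [eq_empty_iff_forall_notMem]
  intro z hz
  obtain ⟨r, hr, hball⟩ := Metric.isOpen_iff.mp isOpen_interior z hz
  have hzS : z ∈ S := interior_subset hz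
  have hsingle : Metric.ball z (min r ε) = {z} := by
    apply Subset.antisymm
    · intro y hy
      have hyS : y ∈ S := interior_subset (hball (Metric.ball_subset_ball (min_le_left r ε) hy))
      have hyd : dist y z < ε := lt_of_lt_of_le (Metric.mem_ball.mp hy) (min_le_right r ε)
      by_contra hyz
      exact absurd hyd (not_lt.mpr (hS y hyS z hzS hyz))
    · rintro y rfl
      exact Metric.mem_ball_self (lt_min hr hε)
  exact hY z (hsingle ▸ Metric.isOpen_ball)

lemma interior_union_empty {Y : Type*} [TopologicalSpace Y] {A B : Set Y}
    (hA : IsClosed A) (hAi : interior A = ∅) (hBi : interior B = ∅) :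
    interior (A ∪ B) = ∅ := by
  have hUB : interior (A ∪ B) \ A ⊆ interior B := by
    apply interior_maximal ?_ (isOpen_interior.sdiff hA)
    intro y hy
    rcases interior_subset hy.1 with h | h
    · exact absurd h hy.2
    · exact h
  rw [hBi, subset_empty_iff, diff_eq_empty] at hUB
  have h2 : interior (A ∪ B) ⊆ interior A := interior_maximal hUB isOpen_interior
  rw [hAi, subset_empty_iff] at h2
  exact h2

lemma exists_increasing_codense {Y : Type*} [MetricSpace Y]
    (hY : ∀ y : Y, ¬ IsOpen ({y} : Set Y)) :
    ∃ A : ℕ → Set Y, Monotone A ∧ (⋃ n, A n) = Set.univ ∧ ∀ n, Dense (A n)ᶜ := by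
  have hpos : ∀ n : ℕ, (0 : ℝ) < 1 / (n + 1) := fun n => by positivity
  choose S hsep hnet using fun n : ℕ => exists_net (Y := Y) (1 / (n + 1)) (hpos n)
  set D : Set Y := ⋃ k, S k with hD
  set N : ℕ → Set Y := fun n => ⋃ k ≤ n, S k with hN
  have hNclosed : ∀ n, IsClosed (N n) ∧ interior (N n) = ∅ := by
    intro n
    induction n with
    | zero =>
      have : N 0 = S 0 := by simp [hN]
      rw [this]
      exact ⟨separated_isClosed (hpos 0) (hsep 0),
        separated_interior_empty hY (hpos 0) (hsep 0)⟩
    | succ n ih =>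
      have hstep : N (n + 1) = N n ∪ S (n + 1) := by
        simp only [hN]
        ext y
        simp only [mem_iUnion, mem_union]
        constructor
        · rintro ⟨k, hk, hy⟩
          rcases Nat.lt_or_ge k (n + 1) with h | h
          · exact Or.inl ⟨k, Nat.lt_succ_iff.mp h, hy⟩
          · exact Or.inr ((Nat.le_antisymm hk h) ▸ hy)
        · rintro (⟨k, hk, hy⟩ | hy)
          · exact ⟨k, le_trans hk (Nat.le_succ n), hy⟩
          · exact ⟨n + 1, le_refl _, hy⟩
      rw [hstep]
      refine ⟨ih.1.union (separated_isClosed (hpos (n + 1)) (hsep (n + 1))), ?_⟩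
      exact interior_union_empty ih.1 ih.2
        (separated_interior_empty hY (hpos (n + 1)) (hsep (n + 1)))
  refine ⟨fun n => Dᶜ ∪ N n, ?_, ?_, ?_⟩
  · intro n m hnm
    apply union_subset_union_right
    intro y hy
    simp only [hN, mem_iUnion] at hy ⊢
    obtain ⟨k, hk, hy⟩ := hy
    exact ⟨k, le_trans hk hnm, hy⟩
  · rw [eq_univ_iff_forall]
    intro y
    by_cases hyD : y ∈ D
    · obtain ⟨k, hk⟩ := mem_iUnion.mp hyD
      exact mem_iUnion.mpr ⟨k, Or.inr (mem_iUnion.mpr ⟨k, mem_iUnion.mpr ⟨le_refl k, hk⟩⟩)⟩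
    · exact mem_iUnion.mpr ⟨0, Or.inl hyD⟩
  · intro n
    rw [compl_union, compl_compl]
    rw [dense_iff_inter_open]
    intro U hU hUne
    have hUN : (U \ N n).Nonempty := by
      by_contra hne
      rw [not_nonempty_iff_eq_empty, diff_eq_empty] at hne
      have : U ⊆ interior (N n) := interior_maximal hne hU
      rw [(hNclosed n).2, subset_empty_iff] at this
      exact absurd this (Set.nonempty_iff_ne_empty.mp hUne)
    obtain ⟨x, hxU, hxN⟩ := hUN
    obtain ⟨r, hr, hball⟩ := Metric.isOpen_iff.mp (hU.sdiff (hNclosed n).1) x ⟨hxU, hxN⟩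
    obtain ⟨k, hk⟩ := exists_nat_one_div_lt hr
    obtain ⟨s, hsS, hs⟩ := hnet k x
    have hsball : s ∈ Metric.ball x r := by
      rw [Metric.mem_ball, dist_comm]
      exact lt_trans hs hk
    obtain ⟨hsU, hsN⟩ := hball hsball
    exact ⟨s, hsU, mem_iUnion.mpr ⟨k, hsS⟩, hsN⟩

variable (X : Type*) [TopologicalSpace X]

def IsQOmegaSet : Prop :=
  ∀ Xn : ℕ → Set X, Monotone Xn → (⋃ n, Xn n) = Set.univ →
    ∃ F : ℕ → Set X, (∀ n, IsClosed (F n) ∧ F n ⊆ Xn n) ∧ (⋃ n, F n) = Set.univ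

/-- Every metrizable `Q_ω`-set is perfectly meager: every crowded subspace (one without
isolated points) is meager in itself. -/
theorem perfectlyMeager_of_metrizable_QOmegaSet [TopologicalSpace.MetrizableSpace X]
    (hQ : IsQOmegaSet X) (Z : Set X) (hZ : ∀ z : Z, ¬ IsOpen ({z} : Set Z)) :
    IsMeagre (Set.univ : Set Z) := by
  letI : MetricSpace Z := TopologicalSpace.metrizableSpaceMetric Z
  obtain ⟨A, hmono, hAcov, hAdense⟩ := exists_increasing_codense (Y := Z) hZ
  set Xn : ℕ → Set X := fun n => Zᶜ ∪ Subtype.val '' A n with hXn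
  have hXmono : Monotone Xn := fun n m hnm =>
    union_subset_union_right _ (image_mono (hmono hnm))
  have hXcov : (⋃ n, Xn n) = Set.univ := by
    rw [eq_univ_iff_forall]
    intro x
    by_cases hx : x ∈ Z
    · have : (⟨x, hx⟩ : Z) ∈ ⋃ n, A n := hAcov ▸ mem_univ _
      obtain ⟨n, hn⟩ := mem_iUnion.mp this
      exact mem_iUnion.mpr ⟨n, Or.inr ⟨⟨x, hx⟩, hn, rfl⟩⟩
    · exact mem_iUnion.mpr ⟨0, Or.inl hx⟩
  obtain ⟨F, hF, hFcov⟩ := hQ Xn hXmono hXcov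
  set G : ℕ → Set Z := fun n => Subtype.val ⁻¹' F n with hG
  have hGsub : ∀ n, G n ⊆ A n := by
    intro n z hz
    have h1 : (z : X) ∈ Xn n := (hF n).2 hz
    rcases h1 with h | ⟨w, hw, hwz⟩
    · exact absurd z.2 h
    · rwa [Subtype.val_injective hwz] at hw
  have hGnwd : ∀ n, IsNowhereDense (G n) := by
    intro n
    have hGc : IsClosed (G n) := (hF n).1.preimage continuous_subtype_val
    rw [hGc.isNowhereDense_iff]
    have : interior (G n) ⊆ interior (A n) := interior_mono (hGsub n)
    rw [interior_eq_empty_iff_dense_compl.mpr (hAdense n), subset_empty_iff] at this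
    exact this
  have hGcov : (Set.univ : Set Z) ⊆ ⋃ n, G n := by
    intro z _
    have : (z : X) ∈ ⋃ n, F n := hFcov ▸ mem_univ _
    obtain ⟨n, hn⟩ := mem_iUnion.mp this
    exact mem_iUnion.mpr ⟨n, hn⟩
  have hmeagre : IsMeagre (⋃ n, G n) :=
    isMeagre_iUnion fun n => isMeagre_iff_countable_union_isNowhereDense.mpr
      ⟨{G n}, by simpa using hGnwd n, countable_singleton _, by simp⟩
  exact hmeagre.mono hGcov

end Stmt13
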